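/- Let a < a' < b' < b and define κ₁ = (S(a') − S(a))/(S(b') − S(a')), κ₂ = (S(b) − S(b'))/(S(b') − S(a')), and c = (κ₁κ₂/(1 + κ₁ + κ₂)) · (S(b') − S(a')) · m([a',b']). Then for every integer n ≥ 0 and every x ∈ [a',b'], the n-fold iterate of the Green operator applied to the constant function 1 satisfies Gⁿ1(x) ≥ cⁿ. -/

import Mathlib

open MeasureTheory Set
open scoped ENNReal

/-- The Green kernel `G(a,b,x,y)` on `[a,b]`. -/
noncomputable def greenKernel (S : ℝ → ℝ) (a b x y : ℝ) : ℝ :=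
  if y ≤ x then (S b - S x) * (S y - S a) / (S b - S a)
  else (S b - S y) * (S x - S a) / (S b - S a)

/-- The Green operator `Gf(x) = ∫_{[a,b]} G(a,b,x,y) f(y) dm(y)`. -/
noncomputable def greenOp (S : ℝ → ℝ) (m : Measure ℝ) (a b : ℝ) (f : ℝ → ℝ≥0∞) :
    ℝ → ℝ≥0∞ :=
  fun x => ∫⁻ y in Icc a b, ENNReal.ofReal (greenKernel S a b x y) * f y ∂m

/-- Let `a < a' < b' < b`, `κ₁ = (S(a') − S(a))/(S(b') − S(a'))`,
`κ₂ = (S(b) − S(b'))/(S(b') − S(a'))` and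
`c = (κ₁κ₂/(1 + κ₁ + κ₂))·(S(b') − S(a'))·m([a',b'])`. Then for every `n ≥ 0` and every
`x ∈ [a',b']`, `Gⁿ1(x) ≥ cⁿ`. -/
theorem green_iterate_lower_bound
    (S : ℝ → ℝ) (hScont : Continuous S) (hSmono : StrictMono S)
    (m : Measure ℝ) [IsFiniteMeasure m]
    (a a' b' b : ℝ) (haa' : a < a') (ha'b' : a' < b') (hb'b : b' < b)
    (κ₁ κ₂ c : ℝ)
    (hκ₁ : κ₁ = (S a' - S a) / (S b' - S a'))
    (hκ₂ : κ₂ = (S b - S b') / (S b' - S a'))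
    (hc : c = κ₁ * κ₂ / (1 + κ₁ + κ₂) * (S b' - S a') * (m (Icc a' b')).toReal) :
    ∀ (n : ℕ) (x : ℝ), x ∈ Icc a' b' →
      ENNReal.ofReal c ^ n ≤ (greenOp S m a b)^[n] (fun _ => 1) x := by
  have h1 : S a < S a' := hSmono haa'
  have h2 : S a' < S b' := hSmono ha'b'
  have h3 : S b' < S b := hSmono hb'b
  have hΔ : (0:ℝ) < S b' - S a' := by linarith
  have hBA : (0:ℝ) < S b - S a := by linarith
  set c' : ℝ := (S a' - S a) * (S b - S b') / (S b - S a) with hc'def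
  have hc'pos : 0 < c' := by
    rw [hc'def]
    have hnum : (0:ℝ) < (S a' - S a) * (S b - S b') :=
      mul_pos (by linarith) (by linarith)
    exact div_pos hnum hBA
  have hsum : 1 + κ₁ + κ₂ = (S b - S a) / (S b' - S a') := by
    rw [hκ₁, hκ₂]; field_simp; ring
  have hceq : c = c' * (m (Icc a' b')).toReal := by
    rw [hc, hsum, hκ₁, hκ₂, hc'def]
    field_simp
  -- kernel lower bound
  have hker : ∀ x ∈ Icc a' b', ∀ y ∈ Icc a' b', c' ≤ greenKernel S a b x y := by
    intro x hx y hy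
    have hxa : S a' ≤ S x := hSmono.monotone hx.1
    have hxb : S x ≤ S b' := hSmono.monotone hx.2
    have hya : S a' ≤ S y := hSmono.monotone hy.1
    have hyb : S y ≤ S b' := hSmono.monotone hy.2
    unfold greenKernel
    split_ifs
    · rw [hc'def]
      have h := mul_le_mul (by linarith : S b - S b' ≤ S b - S x)
        (by linarith : S a' - S a ≤ S y - S a) (by linarith) (by linarith)
      exact (div_le_div_iff_of_pos_right hBA).mpr (by nlinarith)
    · rw [hc'def]
      have h := mul_le_mul (by linarith : S b - S b' ≤ S b - S y)
        (by linarith : S a' - S a ≤ S x - S a) (by linarith) (by linarith)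
      exact (div_le_div_iff_of_pos_right hBA).mpr (by nlinarith)
  -- ofReal c relation
  have hms : m (Icc a' b') ≠ ⊤ := measure_ne_top m _
  have hcofReal : ENNReal.ofReal c = ENNReal.ofReal c' * m (Icc a' b') := by
    rw [hceq, ENNReal.ofReal_mul hc'pos.le, ENNReal.ofReal_toReal hms]
  intro n
  induction n with
  | zero => intro x hx; simp
  | succ n ih =>
    intro x hx
    rw [Function.iterate_succ_apply']
    have hsub : Icc a' b' ⊆ Icc a b :=
      Icc_subset_Icc (le_of_lt haa') (le_of_lt hb'b)
    calc ENNReal.ofReal c ^ (n + 1)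
        = ENNReal.ofReal c' * m (Icc a' b') * ENNReal.ofReal c ^ n := by
          rw [pow_succ, ← hcofReal]; ring
      _ = ∫⁻ _ in Icc a' b', ENNReal.ofReal c' * ENNReal.ofReal c ^ n ∂m := by
          rw [MeasureTheory.setLIntegral_const]; ring
      _ ≤ ∫⁻ y in Icc a' b',
            ENNReal.ofReal (greenKernel S a b x y) *
              (greenOp S m a b)^[n] (fun _ => 1) y ∂m := by
          apply MeasureTheory.setLIntegral_mono' measurableSet_Icc
          intro y hy
          exact mul_le_mul' (ENNReal.ofReal_le_ofReal (hker x hx y hy)) (ih y hy)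
      _ ≤ ∫⁻ y in Icc a b,
            ENNReal.ofReal (greenKernel S a b x y) *
              (greenOp S m a b)^[n] (fun _ => 1) y ∂m :=
          lintegral_mono_set hsub
      _ = greenOp S m a b ((greenOp S m a b)^[n] fun _ => 1) x := rfl
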